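/- Let X be a separable infinite-dimensional complex Banach space, N ≥ 2, and let T₁, …, T_N be continuous linear operators on X. If T₁, …, T_N satisfy the d-Hypercyclicity Criterion with respect to some strictly increasing sequence (n_k) of positive integers, then T₁, …, T_N are densely d-hypercyclic, i.e. the set of x ∈ X such that {(T₁^n x, …, T_N^n x) : n ∈ ℕ} is dense in X^N is itself dense in X. -/
import Mathlib


open Filter Topology

/-- Continuous linear operators `T 0, …, T (N-1)` on `X` satisfy the d-Hypercyclicity Criterion
with respect to the strictly increasing sequence `(n k)` of positive integers. -/
def DHypCriterionWrt {X : Type*} [NormedAddCommGroup X] [NormedSpace ℂ X]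
    {N : ℕ} (T : Fin N → X →L[ℂ] X) (n : ℕ → ℕ) : Prop :=
  ∃ (X₀ : Set X) (Xs : Fin N → Set X) (S : Fin N → ℕ → X → X),
    Dense X₀ ∧ (∀ l, Dense (Xs l)) ∧
    (∀ l : Fin N, ∀ x ∈ X₀, Tendsto (fun k => ((T l) ^ (n k)) x) atTop (𝓝 0)) ∧
    (∀ l : Fin N, ∀ x ∈ Xs l, Tendsto (fun k => S l k x) atTop (𝓝 0)) ∧
    (∀ l i : Fin N, ∀ x ∈ Xs i,
      Tendsto (fun k => ((T l) ^ (n k)) (S i k x) - (if i = l then x else 0)) atTop (𝓝 0))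

theorem stmt15
    {X : Type*} [NormedAddCommGroup X] [NormedSpace ℂ X] [CompleteSpace X]
    [TopologicalSpace.SeparableSpace X] (hinfdim : ¬ FiniteDimensional ℂ X)
    {N : ℕ} (hN : 2 ≤ N) (T : Fin N → X →L[ℂ] X)
    (n : ℕ → ℕ) (hn : StrictMono n) (hn1 : ∀ k, 1 ≤ n k)
    (hcrit : DHypCriterionWrt T n) :
    Dense {x : X | Dense (Set.range fun m : ℕ => fun l : Fin N => ((T l) ^ m) x)} := by
  obtain ⟨X₀, Xs, S, hX₀d, hXsd, hT0, hS0, hTS⟩ := hcrit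
  obtain ⟨D, hDc, hDd⟩ := TopologicalSpace.exists_countable_dense (Fin N → X)
  haveI := hDc.to_subtype
  -- the orbit map
  set F : X → ℕ → (Fin N → X) := fun x m l => ((T l) ^ m) x with hFdef
  -- the countable family of open sets
  set G : D × ℕ → Set X := fun p =>
    ⋃ m : ℕ, {x : X | F x m ∈ Metric.ball (p.1 : Fin N → X) (1 / ((p.2 : ℝ) + 1))} with hGdef
  have hGopen : ∀ p, IsOpen (G p) := by
    intro p
    apply isOpen_iUnion
    intro m
    have hcont : Continuous fun x : X => F x m :=
      continuous_pi fun l => ((T l) ^ m).continuous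
    exact Metric.isOpen_ball.preimage hcont
  have hGdense : ∀ p, Dense (G p) := by
    rintro ⟨⟨y, hyD⟩, j⟩
    rw [Metric.dense_iff]
    intro a δ hδ
    set ε : ℝ := 1 / ((j : ℝ) + 1) with hεdef
    have hε : 0 < ε := by positivity
    obtain ⟨x₀, hx₀b, hx₀X⟩ := Metric.dense_iff.mp hX₀d a (δ / 2) (by positivity)
    have hx₀d : dist x₀ a < δ / 2 := Metric.mem_ball.mp hx₀b
    have hu : ∀ l : Fin N, ∃ u ∈ Xs l, dist u (y l) < ε / 2 := by
      intro l
      obtain ⟨u, hub, huX⟩ := Metric.dense_iff.mp (hXsd l) (y l) (ε / 2) (by positivity)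
      exact ⟨u, huX, Metric.mem_ball.mp hub⟩
    choose u huX hud using hu
    set z : ℕ → X := fun k => x₀ + ∑ i, S i k (u i) with hzdef
    have hz : Tendsto z atTop (𝓝 x₀) := by
      have hsum : Tendsto (fun k => ∑ i, S i k (u i)) atTop (𝓝 0) := by
        have := tendsto_finset_sum Finset.univ (fun i _ => hS0 i (u i) (huX i))
        simpa using this
      have := (tendsto_const_nhds (x := x₀)).add hsum
      simpa using this
    have hTz : ∀ l : Fin N,
        Tendsto (fun k => ((T l) ^ (n k)) (z k)) atTop (𝓝 (u l)) := by
      intro l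
      have hB : Tendsto
          (fun k => ∑ i, (((T l) ^ (n k)) (S i k (u i)) - (if i = l then u i else 0)))
          atTop (𝓝 0) := by
        have := tendsto_finset_sum Finset.univ (fun i _ => hTS l i (u i) (huX i))
        simpa using this
      have hA := hT0 l x₀ hx₀X
      have key : Tendsto (fun k => ((T l) ^ (n k)) x₀ +
          ((∑ i, (((T l) ^ (n k)) (S i k (u i)) - (if i = l then u i else 0))) + u l))
          atTop (𝓝 (u l)) := by
        have := hA.add (hB.add (tendsto_const_nhds (x := u l)))
        simpa using this
      have heq : (fun k => ((T l) ^ (n k)) (z k)) = fun k => ((T l) ^ (n k)) x₀ +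
          ((∑ i, (((T l) ^ (n k)) (S i k (u i)) - (if i = l then u i else 0))) + u l) := by
        funext k
        simp only [hzdef, map_add, map_sum, Finset.sum_sub_distrib,
          Finset.sum_ite_eq', Finset.mem_univ, if_true]
        abel
      rw [heq]
      exact key
    have h1 : ∀ᶠ k in atTop, dist (z k) x₀ < δ / 2 := by
      have := hz.eventually (Metric.ball_mem_nhds x₀ (by positivity : (0:ℝ) < δ / 2))
      simpa [Metric.mem_ball] using this
    have h2 : ∀ᶠ k in atTop, ∀ l : Fin N, dist (((T l) ^ (n k)) (z k)) (u l) < ε / 2 := by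
      rw [eventually_all]
      intro l
      have := (hTz l).eventually (Metric.ball_mem_nhds (u l) (by positivity : (0:ℝ) < ε / 2))
      simpa [Metric.mem_ball] using this
    obtain ⟨k, hk1, hk2⟩ := (h1.and h2).exists
    refine ⟨z k, ?_, ?_⟩
    · rw [Metric.mem_ball]
      calc dist (z k) a ≤ dist (z k) x₀ + dist x₀ a := dist_triangle _ _ _
        _ < δ / 2 + δ / 2 := by exact add_lt_add hk1 hx₀d
        _ = δ := by ring
    · refine Set.mem_iUnion.mpr ⟨n k, ?_⟩
      rw [Set.mem_setOf_eq, Metric.mem_ball]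
      rw [dist_pi_lt_iff hε]
      intro l
      calc dist (F (z k) (n k) l) (y l)
          ≤ dist (((T l) ^ (n k)) (z k)) (u l) + dist (u l) (y l) := dist_triangle _ _ _
        _ < ε / 2 + ε / 2 := add_lt_add (hk2 l) (hud l)
        _ = ε := by ring
  have hsub : (⋂ p, G p) ⊆ {x : X | Dense (Set.range fun m : ℕ => fun l : Fin N => ((T l) ^ m) x)} := by
    intro x hx
    rw [Set.mem_setOf_eq]
    show DenseRange (F x)
    rw [Metric.denseRange_iff]
    intro w r hr
    obtain ⟨y, hyb, hyD⟩ := Metric.dense_iff.mp hDd w (r / 2) (by positivity)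
    have hyw : dist y w < r / 2 := Metric.mem_ball.mp hyb
    obtain ⟨j, hj⟩ := exists_nat_one_div_lt (show (0:ℝ) < r / 2 by positivity)
    have hxG := Set.mem_iInter.mp hx (⟨⟨y, hyD⟩, j⟩ : D × ℕ)
    obtain ⟨m, hm⟩ := Set.mem_iUnion.mp hxG
    have hm' : dist (F x m) y < 1 / ((j : ℝ) + 1) := Metric.mem_ball.mp hm
    refine ⟨m, ?_⟩
    calc dist w (F x m) ≤ dist w y + dist y (F x m) := dist_triangle _ _ _
      _ < r / 2 + r / 2 := by
          refine add_lt_add ?_ ?_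
          · rw [dist_comm]; exact hyw
          · rw [dist_comm]; exact lt_trans hm' hj
      _ = r := by ring
  exact (dense_iInter_of_isOpen hGopen hGdense).mono hsub
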